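/- arXiv:1907.02135 — 2 statements merged into one kernel-verified Lean document; each statement's English description precedes it below -/
import Mathlib

section
/- For every i ∈ ℕ, the following identity holds in U(sl₂): e^i f^i = ∏_{j=1}^{i} (Λ − (h − 2j + 2)(h − 2j)/4). -/
open scoped TensorProduct

noncomputable section

namespace RacahPaper

variable (F : Type) [Field F]

/-- Defining relations of `U(sl₂)`: generators `e = ι 0`, `f = ι 1`, `h = ι 2` with
`he - eh = 2e`, `hf - fh = -2f`, `ef - fe = h`. -/
inductive slRel : FreeAlgebra F (Fin 3) → FreeAlgebra F (Fin 3) → Prop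
  | he : slRel (FreeAlgebra.ι F 2 * FreeAlgebra.ι F 0 - FreeAlgebra.ι F 0 * FreeAlgebra.ι F 2)
      (2 * FreeAlgebra.ι F 0)
  | hf : slRel (FreeAlgebra.ι F 2 * FreeAlgebra.ι F 1 - FreeAlgebra.ι F 1 * FreeAlgebra.ι F 2)
      (-(2 * FreeAlgebra.ι F 1))
  | ef : slRel (FreeAlgebra.ι F 0 * FreeAlgebra.ι F 1 - FreeAlgebra.ι F 1 * FreeAlgebra.ι F 0)
      (FreeAlgebra.ι F 2)

/-- The universal enveloping algebra `U(sl₂)`. -/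
abbrev U := RingQuot (slRel F)

/-- The generator `e` of `U(sl₂)`. -/
def e : U F := RingQuot.mkAlgHom F (slRel F) (FreeAlgebra.ι F 0)

/-- The generator `f` of `U(sl₂)`. -/
def f : U F := RingQuot.mkAlgHom F (slRel F) (FreeAlgebra.ι F 1)

/-- The generator `h` of `U(sl₂)`. -/
def h : U F := RingQuot.mkAlgHom F (slRel F) (FreeAlgebra.ι F 2)

/-- The equitable generator `x = -f - h/2`. -/
def ux : U F := -f F - (2 : F)⁻¹ • h F

/-- The equitable generator `y = h/2`. -/
def uy : U F := (2 : F)⁻¹ • h F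

/-- The equitable generator `z = e - h/2`. -/
def uz : U F := e F - (2 : F)⁻¹ • h F

/-- The normalized Casimir element `Λ = ef + h(h-2)/4` of `U(sl₂)`. -/
def Lam : U F := e F * f F + (4 : F)⁻¹ • (h F * (h F - 2))

/-- `ν_x = f/2`. -/
def nux : U F := (2 : F)⁻¹ • f F

/-- `ν_z = e/2`. -/
def nuz : U F := (2 : F)⁻¹ • e F

/-- `U_n`: the span of the `e^i h^j f^k` with `k - i = n`. -/
def Usub (n : ℤ) : Submodule F (U F) :=
  Submodule.span F {u : U F | ∃ i j k : ℕ, (k : ℤ) - (i : ℤ) = n ∧ u = e F ^ i * h F ^ j * f F ^ k}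

-- Racah algebra
/-- Generator `A` of the free algebra. -/
def fA : FreeAlgebra F (Fin 4) := FreeAlgebra.ι F 0
/-- Generator `B` of the free algebra. -/
def fB : FreeAlgebra F (Fin 4) := FreeAlgebra.ι F 1
/-- Generator `C` of the free algebra. -/
def fC : FreeAlgebra F (Fin 4) := FreeAlgebra.ι F 2
/-- Generator `D` of the free algebra. -/
def fD : FreeAlgebra F (Fin 4) := FreeAlgebra.ι F 3

/-- `α = [A,D] + AC - BA` in the free algebra. -/
def falpha : FreeAlgebra F (Fin 4) := (fA F * fD F - fD F * fA F) + fA F * fC F - fB F * fA F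
/-- `β = [B,D] + BA - CB` in the free algebra. -/
def fbeta : FreeAlgebra F (Fin 4) := (fB F * fD F - fD F * fB F) + fB F * fA F - fC F * fB F
/-- `γ = [C,D] + CB - AC` in the free algebra. -/
def fgamma : FreeAlgebra F (Fin 4) := (fC F * fD F - fD F * fC F) + fC F * fB F - fA F * fC F

/-- Defining relations of the Racah algebra: `[A,B] = [B,C] = [C,A] = 2D` and each of
`α, β, γ` commutes with each of the generators `A, B, C, D`. -/
inductive racahRel : FreeAlgebra F (Fin 4) → FreeAlgebra F (Fin 4) → Prop
  | AB : racahRel (fA F * fB F - fB F * fA F) (2 * fD F)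
  | BC : racahRel (fB F * fC F - fC F * fB F) (2 * fD F)
  | CA : racahRel (fC F * fA F - fA F * fC F) (2 * fD F)
  | calpha (i : Fin 4) : racahRel (falpha F * FreeAlgebra.ι F i) (FreeAlgebra.ι F i * falpha F)
  | cbeta (i : Fin 4) : racahRel (fbeta F * FreeAlgebra.ι F i) (FreeAlgebra.ι F i * fbeta F)
  | cgamma (i : Fin 4) : racahRel (fgamma F * FreeAlgebra.ι F i) (FreeAlgebra.ι F i * fgamma F)

/-- The Racah algebra `ℜ`. -/
abbrev Racah := RingQuot (racahRel F)

/-- Generator `A` of the Racah algebra. -/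
def A : Racah F := RingQuot.mkAlgHom F (racahRel F) (fA F)
/-- Generator `B` of the Racah algebra. -/
def B : Racah F := RingQuot.mkAlgHom F (racahRel F) (fB F)
/-- Generator `C` of the Racah algebra. -/
def C : Racah F := RingQuot.mkAlgHom F (racahRel F) (fC F)
/-- Generator `D` of the Racah algebra. -/
def D : Racah F := RingQuot.mkAlgHom F (racahRel F) (fD F)

/-- `α = [A,D] + AC - BA` in the Racah algebra. -/
def alpha : Racah F := (A F * D F - D F * A F) + A F * C F - B F * A F
/-- `β = [B,D] + BA - CB` in the Racah algebra. -/
def beta : Racah F := (B F * D F - D F * B F) + B F * A F - C F * B F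
/-- `γ = [C,D] + CB - AC` in the Racah algebra. -/
def gamma : Racah F := (C F * D F - D F * C F) + C F * B F - A F * C F
/-- `δ = A + B + C` in the Racah algebra. -/
def delta : Racah F := A F + B F + C F

/-- `Ω_A = D² + (BAC + CAB)/2 + A² + Bγ - Cβ - Aδ`. -/
def OmegaA : Racah F :=
  D F ^ 2 + (2 : F)⁻¹ • (B F * A F * C F + C F * A F * B F) + A F ^ 2
    + B F * gamma F - C F * beta F - A F * delta F

/-- `Ω_B = D² + (CBA + ABC)/2 + B² + Cα - Aγ - Bδ`. -/
def OmegaB : Racah F :=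
  D F ^ 2 + (2 : F)⁻¹ • (C F * B F * A F + A F * B F * C F) + B F ^ 2
    + C F * alpha F - A F * gamma F - B F * delta F

/-- `Ω_C = D² + (ACB + BCA)/2 + C² + Aβ - Bα - Cδ`. -/
def OmegaC : Racah F :=
  D F ^ 2 + (2 : F)⁻¹ • (A F * C F * B F + B F * C F * A F) + C F ^ 2
    + A F * beta F - B F * alpha F - C F * delta F

-- the tensor algebra F[a,b,c] ⊗ U(sl2)
/-- The polynomial algebra `F[a,b,c]`. -/
abbrev P := MvPolynomial (Fin 3) F

/-- The tensor product algebra `F[a,b,c] ⊗ U(sl₂)`. -/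
abbrev T := P F ⊗[F] U F

/-- The indeterminate `a`. -/
def pa : P F := MvPolynomial.X 0
/-- The indeterminate `b`. -/
def pb : P F := MvPolynomial.X 1
/-- The indeterminate `c`. -/
def pc : P F := MvPolynomial.X 2

/-- `A♮`. -/
def Anat : T F :=
  (pa F * (pa F + 1)) ⊗ₜ[F] (1 : U F) + (pb F - pc F - pa F) ⊗ₜ[F] ux F
    + (pa F + pb F - pc F + 1) ⊗ₜ[F] uy F - (1 : P F) ⊗ₜ[F] (ux F * uy F)

/-- `B♮`. -/
def Bnat : T F :=
  (pb F * (pb F + 1)) ⊗ₜ[F] (1 : U F) + (pc F - pa F - pb F) ⊗ₜ[F] uy F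
    + (pb F + pc F - pa F + 1) ⊗ₜ[F] uz F - (1 : P F) ⊗ₜ[F] (uy F * uz F)

/-- `C♮`. -/
def Cnat : T F :=
  (pc F * (pc F + 1)) ⊗ₜ[F] (1 : U F) + (pa F - pb F - pc F) ⊗ₜ[F] uz F
    + (pc F + pa F - pb F + 1) ⊗ₜ[F] ux F - (1 : P F) ⊗ₜ[F] (uz F * ux F)

/-- `D♮`. -/
def Dnat : T F :=
  (1 : P F) ⊗ₜ[F] (uz F * uy F * ux F + uz F * ux F)
    + (pc F + pb F * (pc F + pa F - pb F)) ⊗ₜ[F] ux F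
    + (pa F + pc F * (pa F + pb F - pc F)) ⊗ₜ[F] uy F
    + (pb F + pa F * (pb F + pc F - pa F)) ⊗ₜ[F] uz F
    + (pb F - pc F) ⊗ₜ[F] (ux F * uy F)
    + (pc F - pa F) ⊗ₜ[F] (uy F * uz F)
    + (pa F - pb F) ⊗ₜ[F] (uz F * ux F)

/-- `R = 2 ⊗ yν_x + 2(c+a-b+1) ⊗ ν_x`. -/
def Rel : T F :=
  (2 : P F) ⊗ₜ[F] (uy F * nux F) + (2 * (pc F + pa F - pb F + 1)) ⊗ₜ[F] nux F

/-- `L = -2 ⊗ yν_z - 2(a-b-c-1) ⊗ ν_z`. -/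
def Lel : T F :=
  -((2 : P F) ⊗ₜ[F] (uy F * nuz F)) - (2 * (pa F - pb F - pc F - 1)) ⊗ₜ[F] nuz F

/-- `θ = 1⊗y - b⊗1`. -/
def theta : T F := (1 : P F) ⊗ₜ[F] uy F - pb F ⊗ₜ[F] (1 : U F)

/-- `ϑ = 1⊗y + a⊗1`. -/
def vartheta : T F := (1 : P F) ⊗ₜ[F] uy F + pa F ⊗ₜ[F] (1 : U F)

/-- `F[a,b,c] ⊗ U_n` as a subspace of `F[a,b,c] ⊗ U(sl₂)`. -/
def TU (n : ℤ) : Submodule F (T F) :=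
  Submodule.span F {t : T F | ∃ (p : P F) (u : U F), u ∈ Usub F n ∧ t = p ⊗ₜ[F] u}

lemma U_hf : h F * f F = f F * (h F - 2) := by
  have h1 : h F * f F - f F * h F = -(2 * f F) := by
    have := RingQuot.mkAlgHom_rel F (slRel.hf (F := F))
    simpa [h, f, map_sub, map_mul, map_ofNat] using this
  rw [sub_eq_iff_eq_add] at h1
  rw [h1, mul_sub, mul_two, two_mul]; abel

lemma U_ef : e F * f F = f F * e F + h F := by
  have h1 : e F * f F - f F * e F = h F := by
    have := RingQuot.mkAlgHom_rel F (slRel.ef (F := F))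
    simpa [e, f, h, map_sub, map_mul] using this
  rw [sub_eq_iff_eq_add] at h1
  rw [h1, add_comm]

lemma two_f : (2 : U F) * f F = f F * 2 := by rw [two_mul, mul_two]

lemma h2_f : (h F - 2) * f F = f F * (h F - 4) := by
  rw [sub_mul, U_hf, two_f, ← mul_sub]
  congr 1
  rw [sub_sub]; norm_num

lemma hh2_f : h F * (h F - 2) * f F = f F * ((h F - 2) * (h F - 4)) := by
  rw [mul_assoc, h2_f, ← mul_assoc, U_hf, mul_assoc]

lemma eff : e F * f F * f F = f F * (e F * f F) + f F * (h F - 2) := by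
  rw [U_ef, add_mul, U_hf, mul_assoc, U_ef]

lemma key2 : h F * (h F - 2) = (h F - 2) * (h F - 4) + (4 : F) • (h F - 2) := by
  have hp : (Polynomial.X * (Polynomial.X - 2) : Polynomial F)
      = (Polynomial.X - 2) * (Polynomial.X - 4) + 4 * (Polynomial.X - 2) := by ring
  have := congrArg (Polynomial.aeval (h F)) hp
  simp only [map_mul, map_sub, map_add, Polynomial.aeval_X, map_ofNat] at this
  rw [this, Algebra.smul_def, map_ofNat]

lemma lam_f (hchar : (2 : F) ≠ 0) : Lam F * f F = f F * Lam F := by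
  have h4 : (4 : F) ≠ 0 := by
    have : (4 : F) = 2 * 2 := by norm_num
    rw [this]; exact mul_ne_zero hchar hchar
  unfold Lam
  rw [add_mul, smul_mul_assoc, hh2_f, eff, mul_add, mul_smul_comm]
  have key : f F * (h F * (h F - 2)) =
      f F * ((h F - 2) * (h F - 4)) + (4 : F) • (f F * (h F - 2)) := by
    rw [key2, mul_add, mul_smul_comm]
  rw [key, smul_add, smul_smul, inv_mul_cancel₀ h4, one_smul]
  abel

/-- The `j`-th factor. -/
def g (j : ℕ) : U F :=
  Lam F - (4 : F)⁻¹ • ((h F - 2 * ((j : U F) + 1) + 2) * (h F - 2 * ((j : U F) + 1)))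

lemma cast_f (j : ℕ) : (2 * ((j : U F) + 1)) * f F = f F * (2 * ((j : U F) + 1)) :=
  ((Commute.ofNat_left 2 (f F)).mul_left
    ((Nat.cast_commute j (f F)).add_left (Commute.one_left _))).eq

lemma q1 (j : ℕ) :
    (h F - 2 * ((j : U F) + 1) + 2) * f F = f F * (h F - 2 * ((j : U F) + 1)) := by
  rw [add_mul, sub_mul, U_hf, cast_f, two_f, mul_sub, mul_sub]
  abel

lemma q2 (j : ℕ) :
    (h F - 2 * ((j : U F) + 1)) * f F = f F * (h F - 2 * ((j : U F) + 1) - 2) := by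
  rw [sub_mul, U_hf, cast_f]
  rw [mul_sub, mul_sub, mul_sub]
  abel

lemma quad_shift (j : ℕ) :
    (h F - 2 * ((j : U F) + 1)) * (h F - 2 * ((j : U F) + 1) - 2)
      = (h F - 2 * (((j + 1 : ℕ) : U F) + 1) + 2) * (h F - 2 * (((j + 1 : ℕ) : U F) + 1)) := by
  have hp : ((Polynomial.X - 2 * (Polynomial.C (j : F) + 1))
        * (Polynomial.X - 2 * (Polynomial.C (j : F) + 1) - 2) : Polynomial F)
      = (Polynomial.X - 2 * ((Polynomial.C (j : F) + 1) + 1) + 2)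
        * (Polynomial.X - 2 * ((Polynomial.C (j : F) + 1) + 1)) := by ring
  have := congrArg (Polynomial.aeval (h F)) hp
  simp only [map_mul, map_sub, map_add, Polynomial.aeval_X, Polynomial.aeval_C,
    map_ofNat, map_one, map_natCast] at this
  push_cast
  exact this

lemma g_f (hchar : (2 : F) ≠ 0) (j : ℕ) : g F j * f F = f F * g F (j + 1) := by
  have qq : ((h F - 2 * ((j : U F) + 1) + 2) * (h F - 2 * ((j : U F) + 1))) * f F
      = f F * ((h F - 2 * ((j : U F) + 1)) * (h F - 2 * ((j : U F) + 1) - 2)) := by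
    rw [mul_assoc, q2, ← mul_assoc, q1, mul_assoc]
  unfold g
  rw [sub_mul, lam_f F hchar, smul_mul_assoc, qq, mul_sub (f F) (Lam F),
    mul_smul_comm, quad_shift]

lemma ef_eq : e F * f F = g F 0 := by
  unfold g
  have hp : ((Polynomial.X - 2 * (Polynomial.C ((0 : ℕ) : F) + 1) + 2)
        * (Polynomial.X - 2 * (Polynomial.C ((0 : ℕ) : F) + 1)) : Polynomial F)
      = Polynomial.X * (Polynomial.X - 2) := by simp only [Nat.cast_zero, Polynomial.C_0]; ring
  have := congrArg (Polynomial.aeval (h F)) hp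
  simp only [map_mul, map_sub, map_add, Polynomial.aeval_X, Polynomial.aeval_C,
    map_ofNat, map_one, map_natCast] at this
  rw [this]
  unfold Lam
  rw [add_sub_cancel_right]


lemma prod_f (hchar : (2 : F) ≠ 0) (m : ℕ) :
    ((List.range m).map (g F)).prod * f F
      = f F * ((List.range m).map (fun j => g F (j + 1))).prod := by
  induction m with
  | zero => simp
  | succ n ih =>
    rw [List.range_succ, List.map_append, List.map_append, List.prod_append,
      List.prod_append, List.map_singleton, List.map_singleton,
      List.prod_singleton, List.prod_singleton, mul_assoc, g_f F hchar,
      ← mul_assoc, ih, mul_assoc]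

theorem statement7 (hchar : (2 : F) ≠ 0) (i : ℕ) :
    e F ^ i * f F ^ i =
      ((List.range i).map fun j =>
        Lam F - (4 : F)⁻¹ •
          ((h F - 2 * ((j : U F) + 1) + 2) * (h F - 2 * ((j : U F) + 1)))).prod := by
  have hl : ((List.range i).map fun j =>
      Lam F - (4 : F)⁻¹ •
        ((h F - 2 * ((j : U F) + 1) + 2) * (h F - 2 * ((j : U F) + 1))))
      = (List.range i).map (g F) := by
    simp only [bind_pure_comp, List.map_eq_map, List.map_map]
    exact List.map_congr_left fun a _ => rfl
  rw [hl]
  clear hl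
  induction i with
  | zero => simp
  | succ n ih =>
    rw [pow_succ', pow_succ, mul_assoc, ← mul_assoc (e F ^ n), ih,
      ← mul_assoc, mul_assoc (e F), prod_f F hchar, ← mul_assoc, ef_eq,
      List.range_succ_eq_map, List.map_cons, List.prod_cons, List.map_map]
    rfl

end RacahPaper
end
end

section
/- The following equations hold in F[a,b,c] ⊗ U(sl₂): [R, θ] = R, [R, ϑ] = R, [θ, L] = L, [ϑ, L] = L; equivalently θR = R(θ − 1⊗1), ϑR = R(ϑ − 1⊗1), θL = L(θ + 1⊗1), and ϑL = L(ϑ + 1⊗1). -/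
open scoped TensorProduct

noncomputable section

namespace RacahPaper

variable (F : Type) [Field F]

lemma hf_rel : h F * f F = f F * h F - 2 * f F := by
  have := RingQuot.mkAlgHom_rel F (slRel.hf (F := F))
  simp only [map_sub, map_mul, map_neg, map_ofNat] at this
  rw [← h, ← f] at this
  linear_combination (norm := noncomm_ring) this

lemma he_rel : h F * e F = e F * h F + 2 * e F := by
  have := RingQuot.mkAlgHom_rel F (slRel.he (F := F))
  simp only [map_sub, map_mul, map_ofNat] at this
  rw [← h, ← e] at this
  linear_combination (norm := noncomm_ring) this

lemma nux_uy (hchar : (2 : F) ≠ 0) : nux F * uy F = uy F * nux F + nux F := by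
  rw [nux, uy]
  simp only [smul_mul_assoc, mul_smul_comm]
  rw [hf_rel, two_mul]
  match_scalars <;> (field_simp; try ring)

lemma nuz_uy (hchar : (2 : F) ≠ 0) : nuz F * uy F = uy F * nuz F - nuz F := by
  rw [nuz, uy]
  simp only [smul_mul_assoc, mul_smul_comm]
  rw [he_rel, two_mul]
  match_scalars <;> (field_simp; try ring)

lemma central (p : P F) (t : T F) : (p ⊗ₜ[F] (1 : U F)) * t = t * (p ⊗ₜ[F] (1 : U F)) := by
  induction t using TensorProduct.induction_on with
  | zero => simp
  | tmul q u => simp [Algebra.TensorProduct.tmul_mul_tmul, mul_comm]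
  | add x y hx hy => rw [mul_add, add_mul, hx, hy]

lemma Rel_eq : Rel F =
    ((1 : P F) ⊗ₜ[F] uy F + (pc F + pa F - pb F + 1) ⊗ₜ[F] (1 : U F)) *
      ((2 : P F) ⊗ₜ[F] nux F) := by
  rw [Rel, add_mul, Algebra.TensorProduct.tmul_mul_tmul, Algebra.TensorProduct.tmul_mul_tmul]
  rw [one_mul, one_mul, mul_comm (pc F + pa F - pb F + 1) (2 : P F)]

lemma Lel_eq : Lel F =
    ((1 : P F) ⊗ₜ[F] uy F + (pa F - pb F - pc F - 1) ⊗ₜ[F] (1 : U F)) *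
      ((-2 : P F) ⊗ₜ[F] nuz F) := by
  rw [Lel, add_mul, Algebra.TensorProduct.tmul_mul_tmul, Algebra.TensorProduct.tmul_mul_tmul,
    one_mul, one_mul,
    show (pa F - pb F - pc F - 1) * (-2 : P F) = -(2 * (pa F - pb F - pc F - 1)) from by ring,
    TensorProduct.neg_tmul, TensorProduct.neg_tmul, sub_eq_add_neg]

lemma Nx_s (hchar : (2 : F) ≠ 0) :
    ((2 : P F) ⊗ₜ[F] nux F) * ((1 : P F) ⊗ₜ[F] uy F) =
      ((1 : P F) ⊗ₜ[F] uy F) * ((2 : P F) ⊗ₜ[F] nux F) + (2 : P F) ⊗ₜ[F] nux F := by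
  rw [Algebra.TensorProduct.tmul_mul_tmul, Algebra.TensorProduct.tmul_mul_tmul,
    nux_uy F hchar, TensorProduct.tmul_add, mul_one, one_mul]

lemma Mz_s (hchar : (2 : F) ≠ 0) :
    ((-2 : P F) ⊗ₜ[F] nuz F) * ((1 : P F) ⊗ₜ[F] uy F) + (-2 : P F) ⊗ₜ[F] nuz F =
      ((1 : P F) ⊗ₜ[F] uy F) * ((-2 : P F) ⊗ₜ[F] nuz F) := by
  rw [Algebra.TensorProduct.tmul_mul_tmul, Algebra.TensorProduct.tmul_mul_tmul,
    nuz_uy F hchar, TensorProduct.tmul_sub, mul_one, one_mul]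
  abel

lemma comm3 (s q p N : T F)
    (hN : N * s = s * N + N) (hq : ∀ t, q * t = t * q) (hp : ∀ t, p * t = t * p) :
    ((s + q) * N) * (s + p) - (s + p) * ((s + q) * N) = (s + q) * N := by
  have h2 : (s + q) * (s + p) = (s + p) * (s + q) := by
    simp only [mul_add, add_mul, hq s, hq p, hp s]
    try abel
  have key : ((s + q) * N) * (s + p) = (s + p) * ((s + q) * N) + (s + q) * N := by
    calc ((s + q) * N) * (s + p)
        = (s + q) * (N * s) + (s + q) * (N * p) := by
          simp only [mul_add, mul_assoc]
      _ = (s + q) * (s * N) + (s + q) * N + (s + q) * (p * N) := by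
          rw [hN, ← hp N]
          simp only [mul_add]
          try abel
      _ = ((s + q) * (s + p)) * N + (s + q) * N := by
          simp only [mul_add, add_mul, mul_assoc]
          try abel
      _ = (s + p) * ((s + q) * N) + (s + q) * N := by rw [h2, mul_assoc]
  rw [key]; abel

lemma comm3' (s q p N : T F)
    (hN : N * s + N = s * N) (hq : ∀ t, q * t = t * q) (hp : ∀ t, p * t = t * p) :
    (s + p) * ((s + q) * N) - ((s + q) * N) * (s + p) = (s + q) * N := by
  have h2 : (s + q) * (s + p) = (s + p) * (s + q) := by
    simp only [mul_add, add_mul, hq s, hq p, hp s]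
    try abel
  have key : ((s + q) * N) * (s + p) + (s + q) * N = (s + p) * ((s + q) * N) := by
    calc ((s + q) * N) * (s + p) + (s + q) * N
        = (s + q) * (N * s) + (s + q) * (N * p) + (s + q) * N := by
          simp only [mul_add, mul_assoc]
      _ = (s + q) * (N * s + N) + (s + q) * (p * N) := by
          rw [← hp N, mul_add]
          try abel
      _ = ((s + q) * (s + p)) * N := by
          rw [hN]
          simp only [mul_add, add_mul, mul_assoc]
          try abel
      _ = (s + p) * ((s + q) * N) := by rw [h2, mul_assoc]
  rw [← key]; abel

theorem statement15 (hchar : (2 : F) ≠ 0) :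
    Rel F * theta F - theta F * Rel F = Rel F ∧
    Rel F * vartheta F - vartheta F * Rel F = Rel F ∧
    theta F * Lel F - Lel F * theta F = Lel F ∧
    vartheta F * Lel F - Lel F * vartheta F = Lel F ∧
    theta F * Rel F = Rel F * (theta F - 1) ∧
    vartheta F * Rel F = Rel F * (vartheta F - 1) ∧
    theta F * Lel F = Lel F * (theta F + 1) ∧
    vartheta F * Lel F = Lel F * (vartheta F + 1) := by
  have hcn : ∀ (p : P F) (t : T F),
      (p ⊗ₜ[F] (1 : U F)) * t = t * (p ⊗ₜ[F] (1 : U F)) := central F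
  have htheta : theta F = (1 : P F) ⊗ₜ[F] uy F + (-(pb F)) ⊗ₜ[F] (1 : U F) := by
    rw [theta, sub_eq_add_neg, ← TensorProduct.neg_tmul]
  have hvar : vartheta F = (1 : P F) ⊗ₜ[F] uy F + pa F ⊗ₜ[F] (1 : U F) := by
    rw [vartheta]
  have hR : Rel F * theta F - theta F * Rel F = Rel F := by
    rw [Rel_eq, htheta]
    exact comm3 F _ _ _ _ (Nx_s F hchar) (hcn _) (hcn _)
  have hRv : Rel F * vartheta F - vartheta F * Rel F = Rel F := by
    rw [Rel_eq, hvar]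
    exact comm3 F _ _ _ _ (Nx_s F hchar) (hcn _) (hcn _)
  have hL : ∀ (p : P F),
      ((1 : P F) ⊗ₜ[F] uy F + p ⊗ₜ[F] (1 : U F)) * Lel F
        - Lel F * ((1 : P F) ⊗ₜ[F] uy F + p ⊗ₜ[F] (1 : U F)) = Lel F := by
    intro p
    rw [Lel_eq]
    exact comm3' F _ _ _ _ (Mz_s F hchar) (hcn _) (hcn _)
  have hL1 : theta F * Lel F - Lel F * theta F = Lel F := by
    rw [htheta]; exact hL _
  have hL2 : vartheta F * Lel F - Lel F * vartheta F = Lel F := by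
    rw [hvar]; exact hL _
  refine ⟨hR, hRv, hL1, hL2, ?_, ?_, ?_, ?_⟩
  · have hms := mul_sub (Rel F) (theta F) (1 : T F)
    rw [hms, mul_one, eq_add_of_sub_eq hR]
    abel
  · have hms := mul_sub (Rel F) (vartheta F) (1 : T F)
    rw [hms, mul_one, eq_add_of_sub_eq hRv]
    abel
  · have hma := mul_add (Lel F) (theta F) (1 : T F)
    rw [hma, mul_one, eq_add_of_sub_eq hL1]
    abel
  · have hma := mul_add (Lel F) (vartheta F) (1 : T F)
    rw [hma, mul_one, eq_add_of_sub_eq hL2]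
    abel


end RacahPaper
end
end
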